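/- Let V be a variety of algebras, B ∈ V, and μ, α congruences on B. If the free intersection [μ, α] (with respect to V) equals the trivial congruence ⊥, then α laxly centralizes μ with respect to V. -/

import Mathlib

/-!
Basic universal algebra: signatures, algebras, homomorphisms, congruences
(forming a complete lattice), generated congruences, images and preimages of
congruences, quotient algebras, subalgebras, products, ultraproducts,
varieties (classes closed under H, S, P), the term-condition commutator,
relatively free algebras, and lax centrality.
-/

universe u v

namespace UAlg

/-- A (finitary) signature: a type of operation symbols with arities. -/
structure Signature : Type (u + 1) where
  ops : Type u
  arity : ops → ℕ

/-- An algebra of signature `S`. -/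
structure Algebra (S : Signature.{u}) : Type (u + 1) where
  carrier : Type u
  interp : ∀ o : S.ops, (Fin (S.arity o) → carrier) → carrier

variable {S : Signature.{u}}

/-- A homomorphism of algebras. -/
structure Hom (A B : Algebra S) : Type u where
  toFun : A.carrier → B.carrier
  map_interp : ∀ (o : S.ops) (a : Fin (S.arity o) → A.carrier),
    toFun (A.interp o a) = B.interp o (fun i => toFun (a i))

/-- Composition of homomorphisms. -/
def Hom.comp {A B C : Algebra S} (g : Hom B C) (f : Hom A B) : Hom A C where
  toFun := g.toFun ∘ f.toFun
  map_interp o a := by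
    simp only [Function.comp, f.map_interp, g.map_interp]

/-- A congruence on an algebra: an equivalence relation compatible with the
operations. -/
structure Cong (A : Algebra S) : Type u where
  r : A.carrier → A.carrier → Prop
  iseqv : Equivalence r
  compat : ∀ (o : S.ops) (a b : Fin (S.arity o) → A.carrier),
    (∀ i, r (a i) (b i)) → r (A.interp o a) (A.interp o b)

namespace Cong

variable {A : Algebra S}

theorem ext {c d : Cong A} (h : ∀ x y, c.r x y ↔ d.r x y) : c = d := by
  cases c; cases d
  simp only [mk.injEq]
  funext x y
  exact propext (h x y)

instance : PartialOrder (Cong A) where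
  le c d := ∀ x y, c.r x y → d.r x y
  le_refl c := fun _ _ h => h
  le_trans a b c hab hbc := fun x y h => hbc x y (hab x y h)
  le_antisymm a b h1 h2 := ext fun x y => ⟨h1 x y, h2 x y⟩

instance : InfSet (Cong A) where
  sInf s :=
    { r := fun x y => ∀ c ∈ s, c.r x y
      iseqv :=
        ⟨fun x c _ => c.iseqv.refl x,
         fun h c hc => c.iseqv.symm (h c hc),
         fun h1 h2 c hc => c.iseqv.trans (h1 c hc) (h2 c hc)⟩
      compat := fun o a b h c hc => c.compat o a b fun i => h i c hc }

instance : CompleteLattice (Cong A) :=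
  completeLatticeOfInf _ (fun s =>
    ⟨fun c hc x y h => h c hc, fun _ hd x y h c hc => hd hc x y h⟩)

end Cong

/-- The congruence generated by a binary relation. -/
def conGen (A : Algebra S) (s : A.carrier → A.carrier → Prop) : Cong A :=
  sInf {c : Cong A | ∀ x y, s x y → c.r x y}

/-- The kernel congruence of a homomorphism. -/
def Hom.ker {A B : Algebra S} (f : Hom A B) : Cong A where
  r x y := f.toFun x = f.toFun y
  iseqv := ⟨fun _ => rfl, Eq.symm, Eq.trans⟩
  compat o a b h := by
    show f.toFun (A.interp o a) = f.toFun (A.interp o b)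
    rw [f.map_interp, f.map_interp]
    exact congrArg _ (funext h)

/-- `conMap f α` (written `→f α` in the paper) is the congruence of `B`
generated by the image `f(α)` of the congruence `α` of `A`. -/
def conMap {A B : Algebra S} (f : Hom A B) (α : Cong A) : Cong B :=
  conGen B (fun x y => ∃ a a', α.r a a' ∧ f.toFun a = x ∧ f.toFun a' = y)

/-- The inverse image `f⁻¹(β)` of a congruence. -/
def conComap {A B : Algebra S} (f : Hom A B) (β : Cong B) : Cong A where
  r x y := β.r (f.toFun x) (f.toFun y)
  iseqv :=
    ⟨fun _ => β.iseqv.refl _, fun h => β.iseqv.symm h,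
     fun h1 h2 => β.iseqv.trans h1 h2⟩
  compat o a b h := by
    show β.r (f.toFun (A.interp o a)) (f.toFun (A.interp o b))
    rw [f.map_interp, f.map_interp]
    exact β.compat o _ _ h

/-- The setoid underlying a congruence. -/
def Cong.toSetoid {A : Algebra S} (c : Cong A) : Setoid A.carrier :=
  ⟨c.r, c.iseqv⟩

/-- The quotient algebra of an algebra by a congruence. -/
noncomputable def quotAlg (A : Algebra S) (c : Cong A) : Algebra S where
  carrier := Quotient c.toSetoid
  interp o a := Quotient.mk c.toSetoid (A.interp o (fun i => (a i).out))

/-- The natural (quotient) homomorphism `A → A/c`. -/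
def natHom (A : Algebra S) (c : Cong A) : Hom A (quotAlg A c) where
  toFun := Quotient.mk c.toSetoid
  map_interp o a := by
    apply Quotient.sound
    apply c.compat
    intro i
    show c.r (a i) (Quotient.mk c.toSetoid (a i)).out
    exact Quotient.exact ((Quotient.out_eq (Quotient.mk c.toSetoid (a i))).symm)

/-- A subuniverse: a subset closed under the operations. -/
structure Subuniverse (A : Algebra S) : Type u where
  carrier : Set A.carrier
  closed : ∀ (o : S.ops) (a : Fin (S.arity o) → A.carrier),
    (∀ i, a i ∈ carrier) → A.interp o a ∈ carrier

/-- The subalgebra determined by a subuniverse. -/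
def Subuniverse.alg {A : Algebra S} (s : Subuniverse A) : Algebra S where
  carrier := {x // x ∈ s.carrier}
  interp o a := ⟨A.interp o (fun i => (a i).1), s.closed o _ (fun i => (a i).2)⟩

/-- The product of a family of algebras. -/
def prodAlg {ι : Type u} (A : ι → Algebra S) : Algebra S where
  carrier := ∀ i, (A i).carrier
  interp o a i := (A i).interp o (fun j => a j i)

/-- A variety: a class of algebras closed under homomorphic images,
subalgebras, and products. -/
structure IsVariety (V : Algebra S → Prop) : Prop where
  closed_hom : ∀ (A B : Algebra S) (f : Hom A B),
    Function.Surjective f.toFun → V A → V B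
  closed_sub : ∀ (A : Algebra S) (s : Subuniverse A), V A → V s.alg
  closed_prod : ∀ (ι : Type u) (A : ι → Algebra S), (∀ i, V (A i)) → V (prodAlg A)

/-- `α` laxly centralizes `μ` with respect to the class `V`. -/
def LaxCentralizes (V : Algebra S → Prop) (B : Algebra S) (μ α : Cong B) : Prop :=
  ∃ C : Algebra S, V C ∧ ∃ (π : Hom C B) (β γ : Cong C),
    Function.Surjective π.toFun ∧ μ ≤ conMap π β ∧ α ≤ conMap π γ ∧ β ⊓ γ = ⊥

/-- `B` is a homomorphic image of a member of `K`. -/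
def InH (K : Algebra S → Prop) (B : Algebra S) : Prop :=
  ∃ A, K A ∧ ∃ f : Hom A B, Function.Surjective f.toFun

/-- `B` embeds into a product of members of `K`, i.e. `B ∈ SP(K)`. -/
def InSP (K : Algebra S → Prop) (B : Algebra S) : Prop :=
  ∃ (ι : Type u) (A : ι → Algebra S), (∀ i, K (A i)) ∧
    ∃ f : Hom B (prodAlg A), Function.Injective f.toFun

/-- `B ∈ HSP(K)`: `B` is a homomorphic image of an algebra embeddable in a
product of members of `K`. -/
def InHSP (K : Algebra S → Prop) (B : Algebra S) : Prop :=
  ∃ C : Algebra S, InSP K C ∧ ∃ f : Hom C B, Function.Surjective f.toFun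

/-- The congruence on a product given by an ultrafilter on the index set. -/
def ultraCong {ι : Type u} (A : ι → Algebra S) (U : Ultrafilter ι) :
    Cong (prodAlg A) where
  r x y := {i | x i = y i} ∈ U
  iseqv := by
    refine ⟨fun x => ?_, fun {x y} h => ?_, fun {x y z} h1 h2 => ?_⟩
    · have : {i | x i = x i} = Set.univ := by ext i; simp
      rw [this]; exact Filter.univ_mem
    · have : {i | y i = x i} = {i | x i = y i} := by ext i; exact eq_comm
      rw [this]; exact h
    · refine Filter.mem_of_superset (Filter.inter_mem h1 h2) ?_
      intro i hi
      exact hi.1.trans hi.2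
  compat o a b h := by
    have h1 : (⋂ j, {i | a j i = b j i}) ∈ (U : Filter ι) :=
      (Filter.iInter_mem).2 h
    refine Filter.mem_of_superset h1 ?_
    intro i hi
    simp only [Set.mem_iInter, Set.mem_setOf_eq] at hi
    show (A i).interp o (fun j => a j i) = (A i).interp o (fun j => b j i)
    exact congrArg _ (funext hi)

/-- `B ∈ HSP_u(K)`: `B` is a homomorphic image of an algebra embeddable in an
ultraproduct of members of `K`. -/
def InHSPu (K : Algebra S → Prop) (B : Algebra S) : Prop :=
  ∃ (ι : Type u) (A : ι → Algebra S) (U : Ultrafilter ι), (∀ i, K (A i)) ∧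
    ∃ C : Algebra S,
      (∃ g : Hom C (quotAlg (prodAlg A) (ultraCong A U)),
        Function.Injective g.toFun) ∧
      ∃ f : Hom C B, Function.Surjective f.toFun

/-- `μ` is the monolith of `B`: the minimum nontrivial congruence.
In particular its existence means `B` is subdirectly irreducible. -/
def IsMonolith (B : Algebra S) (μ : Cong B) : Prop :=
  μ ≠ ⊥ ∧ ∀ θ : Cong B, θ ≠ ⊥ → μ ≤ θ

/-- Terms of signature `S` over a set `X` of variables. -/
inductive Tm (S : Signature.{u}) (X : Type v) : Type max u v where
  | var : X → Tm S X
  | app : (o : S.ops) → (Fin (S.arity o) → Tm S X) → Tm S X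

/-- Evaluation of a term in an algebra under an assignment of the variables. -/
def Tm.eval {X : Type v} (A : Algebra S) (v : X → A.carrier) :
    Tm S X → A.carrier
  | .var x => v x
  | .app o t => A.interp o (fun i => Tm.eval A v (t i))

/-- The (term-condition) centralizing relation `C(α, β; δ)`. -/
def Centralizes {A : Algebra S} (α β δ : Cong A) : Prop :=
  ∀ (n : ℕ) (t : Tm S (Unit ⊕ Fin n)) (a b : A.carrier)
    (c d : Fin n → A.carrier),
    α.r a b → (∀ i, β.r (c i) (d i)) →
    δ.r (t.eval A (Sum.elim (fun _ => a) c)) (t.eval A (Sum.elim (fun _ => a) d)) →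
    δ.r (t.eval A (Sum.elim (fun _ => b) c)) (t.eval A (Sum.elim (fun _ => b) d))

/-- The commutator `[α, β]`: the least congruence `δ` such that `α`
centralizes `β` modulo `δ` (the Freese–McKenzie commutator, which is the
modular commutator in congruence-modular varieties). -/
def commutator {A : Algebra S} (α β : Cong A) : Cong A :=
  sInf {δ : Cong A | Centralizes α β δ}

/-- The term algebra over a set of variables. -/
def termAlg (S : Signature.{u}) (X : Type u) : Algebra S :=
  ⟨Tm S X, Tm.app⟩

/-- The congruence of `V`-equations on the term algebra: two terms are related
iff they evaluate the same way in every member of `V`. -/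
def eqThy (V : Algebra S → Prop) (X : Type u) : Cong (termAlg S X) where
  r s t := ∀ A : Algebra S, V A → ∀ v : X → A.carrier, s.eval A v = t.eval A v
  iseqv :=
    ⟨fun _ _ _ _ => rfl, fun h A hA v => (h A hA v).symm,
     fun h1 h2 A hA v => (h1 A hA v).trans (h2 A hA v)⟩
  compat o a b h A hA v := by
    show Tm.eval A v (Tm.app o a) = Tm.eval A v (Tm.app o b)
    simp only [Tm.eval]
    exact congrArg _ (funext fun i => h i A hA v)

/-- The relatively free algebra of `V` on the set `X` of generators. -/
noncomputable def freeAlg (V : Algebra S → Prop) (X : Type u) : Algebra S :=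
  quotAlg (termAlg S X) (eqThy V X)

/-- The canonical generators of the relatively free algebra. -/
def freeGen (V : Algebra S → Prop) (X : Type u) (x : X) :
    (freeAlg V X).carrier :=
  Quotient.mk (eqThy V X).toSetoid (Tm.var x)

/-- The homomorphism from the relatively free algebra of `V` to an algebra
`B ∈ V` induced by an assignment of the generators. -/
def evalFreeHom (V : Algebra S → Prop) (X : Type u) (B : Algebra S)
    (hB : V B) (v : X → B.carrier) : Hom (freeAlg V X) B where
  toFun := Quotient.lift (fun t : Tm S X => t.eval B v) (fun s t h => h B hB v)
  map_interp o a := by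
    show Tm.eval B v (Tm.app o (fun i => (a i).out)) = _
    simp only [Tm.eval]
    congr 1
    funext i
    conv_rhs => rw [← Quotient.out_eq (a i)]
    rfl


/-- `ᾱ`: the congruence on the relatively free algebra of `V` over the
generators `{x_b, y_b : b ∈ B}` (with `x_b = inl b`, `y_b = inr b`) generated
by the pairs `(x_b, x_{b'})` with `b α b'`. -/
noncomputable def barX (V : Algebra S → Prop) (B : Algebra S) (α : Cong B) :
    Cong (freeAlg V (B.carrier ⊕ B.carrier)) :=
  conGen (freeAlg V (B.carrier ⊕ B.carrier)) (fun s t =>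
    ∃ b b' : B.carrier, α.r b b' ∧
      s = freeGen V (B.carrier ⊕ B.carrier) (Sum.inl b) ∧
      t = freeGen V (B.carrier ⊕ B.carrier) (Sum.inl b'))

/-- `β̄`: the congruence on the relatively free algebra of `V` over the
generators `{x_b, y_b : b ∈ B}` generated by the pairs `(y_b, y_{b'})` with
`b β b'`. -/
noncomputable def barY (V : Algebra S → Prop) (B : Algebra S) (β : Cong B) :
    Cong (freeAlg V (B.carrier ⊕ B.carrier)) :=
  conGen (freeAlg V (B.carrier ⊕ B.carrier)) (fun s t =>
    ∃ b b' : B.carrier, β.r b b' ∧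
      s = freeGen V (B.carrier ⊕ B.carrier) (Sum.inr b) ∧
      t = freeGen V (B.carrier ⊕ B.carrier) (Sum.inr b'))

/-- `ζ`: the homomorphism from the relatively free algebra of `V` on the
generators `{x_b, y_b : b ∈ B}` to `B` sending `x_b ↦ b` and `y_b ↦ b`. -/
noncomputable def zeta (V : Algebra S → Prop) (B : Algebra S) (hB : V B) :
    Hom (freeAlg V (B.carrier ⊕ B.carrier)) B :=
  evalFreeHom V (B.carrier ⊕ B.carrier) B hB (Sum.elim id id)

/-- The free intersection `[μ, α]` of congruences `μ`, `α` on `B ∈ V` with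
respect to `V`: the congruence `→ζ (μ̄ ∧ ᾱ)` of `B`, where `μ̄`, `ᾱ` are the
congruences on the relatively free algebra generated by the `μ`-pairs of
`x`-generators and the `α`-pairs of `y`-generators, respectively. -/
noncomputable def freeIntersection {B : Algebra S} (V : Algebra S → Prop)
    (hB : V B) (μ α : Cong B) : Cong B :=
  conMap (zeta V B hB) (barX V B μ ⊓ barY V B α)

section AuxiliaryLemmas

/-- The equality congruence. -/
def eqCong (A : Algebra S) : Cong A where
  r := Eq
  iseqv := eq_equivalence
  compat _ _ _ h := congrArg _ (funext h)

theorem bot_r_iff {A : Algebra S} {x y : A.carrier} :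
    (⊥ : Cong A).r x y ↔ x = y := by
  constructor
  · intro hxy
    exact (bot_le : (⊥ : Cong A) ≤ eqCong A) x y hxy
  · rintro rfl
    exact (⊥ : Cong A).iseqv.refl x

theorem conGen_self {A : Algebra S} {s : A.carrier → A.carrier → Prop}
    {x y : A.carrier} (h : s x y) : (conGen A s).r x y :=
  fun _ hc => hc _ _ h

theorem conGen_le {A : Algebra S} {s : A.carrier → A.carrier → Prop} {c : Cong A}
    (h : ∀ x y, s x y → c.r x y) : conGen A s ≤ c :=
  fun _ _ hx => hx c h

theorem conMap_gen {A B : Algebra S} (f : Hom A B) (α : Cong A) {a a' : A.carrier}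
    (h : α.r a a') : (conMap f α).r (f.toFun a) (f.toFun a') :=
  conGen_self ⟨a, a', h, rfl, rfl⟩

/-- The "intersection" congruence, to show `(c ⊓ d).r` contains pairs in both. -/
def interCong {A : Algebra S} (c d : Cong A) : Cong A where
  r x y := c.r x y ∧ d.r x y
  iseqv :=
    ⟨fun x => ⟨c.iseqv.refl x, d.iseqv.refl x⟩,
     fun h => ⟨c.iseqv.symm h.1, d.iseqv.symm h.2⟩,
     fun h1 h2 => ⟨c.iseqv.trans h1.1 h2.1, d.iseqv.trans h1.2 h2.2⟩⟩
  compat o a b h := ⟨c.compat o a b fun i => (h i).1, d.compat o a b fun i => (h i).2⟩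

theorem inf_r {A : Algebra S} {c d : Cong A} {x y : A.carrier}
    (h1 : c.r x y) (h2 : d.r x y) : (c ⊓ d).r x y :=
  (le_inf (fun _ _ h => h.1) (fun _ _ h => h.2) : interCong c d ≤ c ⊓ d) x y ⟨h1, h2⟩

theorem out_rel {A : Algebra S} (c : Cong A) (x : A.carrier) :
    c.r (Quotient.mk c.toSetoid x).out x :=
  @Quotient.exact _ c.toSetoid _ _ (Quotient.out_eq (Quotient.mk c.toSetoid x))

theorem eval_hom {X : Type u} {A B : Algebra S} (f : Hom A B) (v : X → A.carrier) :
    ∀ t : Tm S X, f.toFun (t.eval A v) = t.eval B (fun x => f.toFun (v x))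
  | .var _ => rfl
  | .app o a => by
    show f.toFun (A.interp o fun i => (a i).eval A v) = B.interp o fun i => (a i).eval B _
    rw [f.map_interp]
    exact congrArg _ (funext fun i => eval_hom f v (a i))

theorem eval_var {X : Type u} : ∀ t : Tm S X, t.eval (termAlg S X) Tm.var = t
  | .var _ => rfl
  | .app o a => congrArg (Tm.app o) (funext fun i => eval_var (a i))

/-- Evaluation as a homomorphism from the term algebra. -/
def evalHom {X : Type u} (A : Algebra S) (v : X → A.carrier) : Hom (termAlg S X) A where
  toFun := Tm.eval A v
  map_interp _ _ := rfl

theorem eqThy_le {V : Algebra S → Prop} {X : Type u} {c : Cong (termAlg S X)}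
    (hc : V (quotAlg (termAlg S X) c)) : eqThy V X ≤ c := by
  intro s t h
  have e : ∀ u : Tm S X,
      u.eval (quotAlg (termAlg S X) c)
        (fun x => (natHom (termAlg S X) c).toFun (Tm.var x)) =
      (natHom (termAlg S X) c).toFun u := by
    intro u
    rw [← eval_hom (natHom (termAlg S X) c) Tm.var u, eval_var]
  have h2 : (natHom (termAlg S X) c).toFun s = (natHom (termAlg S X) c).toFun t := by
    rw [← e s, ← e t]
    exact h _ hc _
  exact Quotient.exact h2

/-- A quotient of the term algebra by the kernel of a homomorphism into a member
of `V` is again in `V`. -/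
theorem V_quot_ker {V : Algebra S → Prop} (hV : IsVariety V) {T A : Algebra S}
    (hA : V A) (g : Hom T A) : V (quotAlg T g.ker) := by
  classical
  let s : Subuniverse A :=
    ⟨Set.range g.toFun, by
      intro o a h
      choose t ht using h
      exact ⟨T.interp o t, by rw [g.map_interp]; exact congrArg _ (funext ht)⟩⟩
  have hs : V s.alg := hV.closed_sub A s hA
  let f : Hom s.alg (quotAlg T g.ker) :=
    { toFun := fun x => Quotient.mk g.ker.toSetoid (Classical.choose x.2)
      map_interp := fun o a => by
        apply Quotient.sound
        show g.toFun (Classical.choose (s.alg.interp o a).2) =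
          g.toFun (T.interp o fun i =>
            (Quotient.mk g.ker.toSetoid (Classical.choose (a i).2)).out)
        rw [Classical.choose_spec (s.alg.interp o a).2, g.map_interp]
        show A.interp o (fun i => (a i).1) = A.interp o _
        refine congrArg _ (funext fun i => ?_)
        have h1 : g.toFun ((Quotient.mk g.ker.toSetoid (Classical.choose (a i).2)).out)
            = g.toFun (Classical.choose (a i).2) := out_rel g.ker _
        rw [h1, Classical.choose_spec (a i).2] }
  have hf : Function.Surjective f.toFun := by
    intro q
    refine ⟨⟨g.toFun q.out, q.out, rfl⟩, ?_⟩
    show Quotient.mk g.ker.toSetoid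
      (Classical.choose (⟨q.out, rfl⟩ : ∃ t, g.toFun t = g.toFun q.out)) = q
    conv_rhs => rw [← Quotient.out_eq q]
    exact Quotient.sound (Classical.choose_spec
      (⟨q.out, rfl⟩ : ∃ t, g.toFun t = g.toFun q.out))
  exact hV.closed_hom _ _ f hf hs

/-- The canonical embedding of the relatively free algebra into the product of
all quotients of the term algebra lying in `V`. -/
noncomputable def freeEmb (V : Algebra S → Prop) (X : Type u) :
    Hom (freeAlg V X)
      (prodAlg (fun i : {c : Cong (termAlg S X) // V (quotAlg (termAlg S X) c)} =>
        quotAlg (termAlg S X) i.1)) where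
  toFun := Quotient.lift
    (fun t => fun i : {c : Cong (termAlg S X) // V (quotAlg (termAlg S X) c)} =>
      Quotient.mk (i.1).toSetoid t)
    (fun s t h => funext fun i => Quotient.sound (eqThy_le i.2 s t h))
  map_interp o a := by
    funext i
    apply Quotient.sound
    apply (i.1).compat o
    intro j
    beta_reduce
    obtain ⟨t, ht⟩ := Quotient.exists_rep (a j)
    rw [← ht]
    exact (i.1).iseqv.trans (eqThy_le i.2 _ _ (out_rel (eqThy V X) t))
      ((i.1).iseqv.symm (out_rel i.1 t))

theorem freeEmb_inj {V : Algebra S → Prop} (hV : IsVariety V) (X : Type u) :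
    Function.Injective (freeEmb V X).toFun := by
  intro p q hpq
  induction p using Quotient.ind
  induction q using Quotient.ind
  rename_i s t
  apply Quotient.sound
  intro A hA v
  have hc : V (quotAlg (termAlg S X) (evalHom A v).ker) := V_quot_ker hV hA (evalHom A v)
  have h1 := congrFun hpq ⟨(evalHom A v).ker, hc⟩
  exact Quotient.exact h1

/-- The relatively free algebra lies in the variety. -/
theorem V_free {V : Algebra S → Prop} (hV : IsVariety V) (X : Type u) :
    V (freeAlg V X) := by
  classical
  have hprod := hV.closed_prod _ _
    (fun i : {c : Cong (termAlg S X) // V (quotAlg (termAlg S X) c)} => i.2)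
  set f := freeEmb V X with hfdef
  have hinj := freeEmb_inj hV X
  let s : Subuniverse (prodAlg (fun i : {c : Cong (termAlg S X) // V (quotAlg (termAlg S X) c)} =>
      quotAlg (termAlg S X) i.1)) :=
    ⟨Set.range f.toFun, by
      intro o a h
      choose t ht using h
      exact ⟨(freeAlg V X).interp o t, by rw [f.map_interp]; exact congrArg _ (funext ht)⟩⟩
  have hs := hV.closed_sub _ s hprod
  let g : Hom s.alg (freeAlg V X) :=
    { toFun := fun x => Classical.choose x.2
      map_interp := fun o a => hinj (by
        rw [Classical.choose_spec (s.alg.interp o a).2, f.map_interp]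
        show (prodAlg _).interp o (fun i => (a i).1) = (prodAlg _).interp o _
        exact congrArg _ (funext fun i => (Classical.choose_spec (a i).2).symm)) }
  have hg : Function.Surjective g.toFun := by
    intro y
    refine ⟨⟨f.toFun y, y, rfl⟩, ?_⟩
    exact hinj (Classical.choose_spec (⟨y, rfl⟩ : ∃ z, f.toFun z = f.toFun y))
  exact hV.closed_hom _ _ g hg hs

end AuxiliaryLemmas

/-- If the free intersection `[μ, α]` with respect to `V` is the
trivial congruence, then `α` laxly centralizes `μ` with respect to `V`. -/
theorem laxCentralizes_of_freeIntersection_eq_bot {V : Algebra S → Prop}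
    (hV : IsVariety V) {B : Algebra S} (hB : V B) (μ α : Cong B)
    (h : freeIntersection V hB μ α = ⊥) :
    LaxCentralizes V B μ α := by
  classical
  set X := (Sum B.carrier B.carrier) with hX
  set F := freeAlg V X with hF
  set θ : Cong F := barX V B μ ⊓ barY V B α with hθdef
  have hζθ : ∀ s t, θ.r s t → (zeta V B hB).toFun s = (zeta V B hB).toFun t := by
    intro s t hst
    have h1 : (conMap (zeta V B hB) θ).r ((zeta V B hB).toFun s) ((zeta V B hB).toFun t) :=
      conMap_gen _ _ hst
    have h2 : conMap (zeta V B hB) θ = ⊥ := h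
    rw [h2] at h1
    exact bot_r_iff.mp h1
  set C := quotAlg F θ with hC
  have hCV : V C := hV.closed_hom F C (natHom F θ)
    (fun q => ⟨q.out, Quotient.out_eq q⟩) (V_free hV X)
  let π : Hom C B :=
    { toFun := Quotient.lift (zeta V B hB).toFun hζθ
      map_interp := fun o a => by
        show (zeta V B hB).toFun (F.interp o fun i => (a i).out) = _
        rw [(zeta V B hB).map_interp]
        refine congrArg _ (funext fun i => ?_)
        show (zeta V B hB).toFun ((a i).out) = Quotient.lift (zeta V B hB).toFun hζθ (a i)
        conv_rhs => rw [← Quotient.out_eq (a i)]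
        rfl }
  have hπ : Function.Surjective π.toFun := by
    intro b
    exact ⟨Quotient.mk θ.toSetoid (freeGen V X (Sum.inl b)), rfl⟩
  set q := natHom F θ with hq
  set β := conMap q (barX V B μ) with hβdef
  set γ := conMap q (barY V B α) with hγdef
  refine ⟨C, hCV, π, β, γ, hπ, ?_, ?_, ?_⟩
  · intro b b' hbb
    exact conGen_self ⟨q.toFun (freeGen V X (Sum.inl b)), q.toFun (freeGen V X (Sum.inl b')),
      conMap_gen q _ (conGen_self ⟨b, b', hbb, rfl, rfl⟩), rfl, rfl⟩
  · intro b b' hbb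
    exact conGen_self ⟨q.toFun (freeGen V X (Sum.inr b)), q.toFun (freeGen V X (Sum.inr b')),
      conMap_gen q _ (conGen_self ⟨b, b', hbb, rfl, rfl⟩), rfl, rfl⟩
  · have hθX : θ ≤ barX V B μ := inf_le_left
    have hθY : θ ≤ barY V B α := inf_le_right
    let mkδ : ∀ (d : Cong F), θ ≤ d → Cong C := fun d hd =>
      { r := fun x y => d.r x.out y.out
        iseqv :=
          ⟨fun x => d.iseqv.refl x.out, fun h' => d.iseqv.symm h',
           fun h1 h2 => d.iseqv.trans h1 h2⟩
        compat := fun o a b hab => by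
          show d.r (C.interp o a).out (C.interp o b).out
          have h1 : d.r (C.interp o a).out (F.interp o fun i => (a i).out) :=
            hd _ _ (out_rel θ _)
          have h2 : d.r (C.interp o b).out (F.interp o fun i => (b i).out) :=
            hd _ _ (out_rel θ _)
          exact d.iseqv.trans h1 (d.iseqv.trans (d.compat o _ _ hab) (d.iseqv.symm h2)) }
    have hδ : ∀ (d : Cong F) (hd : θ ≤ d), conMap q d ≤ mkδ d hd := by
      intro d hd
      apply conGen_le
      rintro x y ⟨s, t, hst, rfl, rfl⟩
      show d.r (q.toFun s).out (q.toFun t).out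
      have h1 : d.r (q.toFun s).out s := hd _ _ (out_rel θ s)
      have h2 : d.r (q.toFun t).out t := hd _ _ (out_rel θ t)
      exact d.iseqv.trans h1 (d.iseqv.trans hst (d.iseqv.symm h2))
    apply le_antisymm _ bot_le
    intro x y hxy
    have h1 : (barX V B μ).r x.out y.out :=
      hδ _ hθX x y ((inf_le_left : β ⊓ γ ≤ β) x y hxy)
    have h2 : (barY V B α).r x.out y.out :=
      hδ _ hθY x y ((inf_le_right : β ⊓ γ ≤ γ) x y hxy)
    have hθr : θ.r x.out y.out := inf_r h1 h2
    have hxy' : x = y := by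
      conv_lhs => rw [← Quotient.out_eq x]
      conv_rhs => rw [← Quotient.out_eq y]
      exact Quotient.sound hθr
    exact hxy' ▸ (⊥ : Cong C).iseqv.refl x


end UAlg
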